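/- arXiv:1905.09782 — 2 statements merged into one kernel-verified Lean document; each statement's English description precedes it below -/
import Mathlib

section
/- (Tarski–Bourbaki) Let E be a set, S ⊆ P(E), and φ : S → E a map such that φ(X) ∉ X for all X ∈ S. Then there exists a unique subset M of E admitting a well-ordering such that: (1) for every x ∈ M, the initial segment S_x = {y ∈ M | y < x} belongs to S and φ(S_x) = x; (2) M ∉ S. -/
universe u

namespace TB

variable {E : Type u} (S : Set (Set E)) (φ : Set E → E)

open scoped Classical in
noncomputable def F : Ordinal.{u} → Option E :=
  WellFounded.fix Ordinal.lt_wf (fun o rec =>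
    if (∀ p, ∀ hp : p < o, rec p hp ≠ none) ∧
        {x | ∃ p, ∃ hp : p < o, rec p hp = some x} ∈ S
    then some (φ {x | ∃ p, ∃ hp : p < o, rec p hp = some x}) else none)

def P (o : Ordinal.{u}) : Set E := {x | ∃ p, ∃ _ : p < o, F S φ p = some x}

open scoped Classical in
lemma F_def (o : Ordinal.{u}) :
    F S φ o = if ((∀ p, p < o → F S φ p ≠ none) ∧ P S φ o ∈ S)
      then some (φ (P S φ o)) else none := by
  rw [F, WellFounded.fix_eq]
  rfl

variable {S φ}

lemma P_mono {p o : Ordinal.{u}} (h : p ≤ o) : P S φ p ⊆ P S φ o := by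
  rintro x ⟨q, hq, hfq⟩
  exact ⟨q, lt_of_lt_of_le hq h, hfq⟩

lemma some_spec {o : Ordinal.{u}} {x : E} (h : F S φ o = some x) :
    (∀ p, p < o → F S φ p ≠ none) ∧ P S φ o ∈ S ∧ x = φ (P S φ o) := by
  rw [F_def] at h
  split_ifs at h with hc
  exact ⟨hc.1, hc.2, (Option.some.inj h).symm⟩

lemma inj (hφ : ∀ X ∈ S, φ X ∉ X) {p q : Ordinal.{u}} {x : E}
    (h1 : F S φ p = some x) (h2 : F S φ q = some x) : p = q := by
  have key : ∀ a b : Ordinal.{u}, a < b → F S φ a = some x → F S φ b = some x → False := by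
    intro a b hab ha hb
    obtain ⟨-, hPS, hx⟩ := some_spec hb
    exact hφ _ hPS (hx ▸ ⟨a, hab, ha⟩)
  rcases lt_trichotomy p q with h | h | h
  · exact absurd (key p q h h1 h2) not_false
  · exact h
  · exact absurd (key q p h h2 h1) not_false

lemma exists_none (hφ : ∀ X ∈ S, φ X ∉ X) : ∃ o : Ordinal.{u}, F S φ o = none := by
  by_contra h
  push_neg at h
  have hsome : ∀ o : Ordinal.{u}, (F S φ o).isSome := fun o =>
    Option.ne_none_iff_isSome.mp (h o)
  refine not_injective_of_ordinal (fun o => (F S φ o).get (hsome o)) ?_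
  intro a b hab
  dsimp only at hab
  have ha : F S φ a = some ((F S φ a).get (hsome a)) := (Option.some_get (hsome a)).symm
  have hb : F S φ b = some ((F S φ b).get (hsome b)) := (Option.some_get (hsome b)).symm
  rw [← hab] at hb
  exact inj hφ ha hb

noncomputable def θ : Ordinal.{u} := sInf {o | F S φ o = none}

noncomputable def rk (x : E) : Ordinal.{u} := sInf {o | F S φ o = some x}

lemma F_theta (hφ : ∀ X ∈ S, φ X ∉ X) : F S φ (θ (S := S) (φ := φ)) = none :=
  csInf_mem (exists_none hφ)

lemma lt_theta_some {p : Ordinal.{u}} (hp : p < θ (S := S) (φ := φ)) : F S φ p ≠ none :=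
  fun h => notMem_of_lt_csInf (s := {o | F S φ o = none}) hp (OrderBot.bddBelow _) h

lemma mem_P_theta {x : E} (hx : x ∈ P S φ (θ (S := S) (φ := φ))) :
    F S φ (rk (S := S) (φ := φ) x) = some x ∧ rk (S := S) (φ := φ) x < θ (S := S) (φ := φ) := by
  obtain ⟨p, hp, hfp⟩ := hx
  have hne : {o | F S φ o = some x}.Nonempty := ⟨p, hfp⟩
  refine ⟨csInf_mem hne, lt_of_le_of_lt (csInf_le (OrderBot.bddBelow _) hfp) hp⟩

end TB

theorem tarski_bourbaki {E : Type*} (S : Set (Set E)) (φ : Set E → E)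
    (hφ : ∀ X ∈ S, φ X ∉ X) :
    ∃! M : Set E, ∃ r : E → E → Prop,
      IsWellOrder M (fun x y : M => r x y) ∧
      (∀ x ∈ M, {y ∈ M | r y x} ∈ S ∧ φ {y ∈ M | r y x} = x) ∧
      M ∉ S := by
  classical
  set θ := TB.θ (S := S) (φ := φ) with hθdef
  set M : Set E := TB.P S φ θ with hMdef
  set r : E → E → Prop := fun x y => TB.rk (S := S) (φ := φ) x < TB.rk (S := S) (φ := φ) y
    with hrdef
  have hlt : ∀ p, p < θ → TB.F S φ p ≠ none := fun p hp => TB.lt_theta_some hp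
  have hMnotS : M ∉ S := by
    intro hMS
    have h0 := TB.F_def S φ θ
    rw [TB.F_theta hφ, if_pos ⟨hlt, hMS⟩] at h0
    exact nomatch h0
  have hmem : ∀ x ∈ M, TB.F S φ (TB.rk (S := S) (φ := φ) x) = some x ∧
      TB.rk (S := S) (φ := φ) x < θ := fun x hx => TB.mem_P_theta hx
  -- the well-order on M
  have hwo : IsWellOrder M (fun x y : M => r x y) := by
    have emb : (fun x y : M => r x y) ↪r ((· < ·) : Ordinal → Ordinal → Prop) := by
      refine ⟨⟨fun x => TB.rk (S := S) (φ := φ) x.1, ?_⟩, Iff.rfl⟩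
      intro a b hab
      dsimp only at hab
      have ha := (hmem a.1 a.2).1
      have hb := (hmem b.1 b.2).1
      rw [hab] at ha
      exact Subtype.ext (Option.some.inj (ha.symm.trans hb))
    exact emb.isWellOrder
  -- segments
  have hseg : ∀ x ∈ M, {y ∈ M | r y x} = TB.P S φ (TB.rk (S := S) (φ := φ) x) := by
    intro x hx
    obtain ⟨hfx, hxθ⟩ := hmem x hx
    ext y
    constructor
    · rintro ⟨hyM, hry⟩
      exact ⟨TB.rk (S := S) (φ := φ) y, hry, (hmem y hyM).1⟩
    · rintro ⟨q, hq, hfq⟩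
      have hyM : y ∈ M := ⟨q, hq.trans hxθ, hfq⟩
      have : TB.rk (S := S) (φ := φ) y = q := TB.inj hφ (hmem y hyM).1 hfq
      exact ⟨hyM, show TB.rk (S := S) (φ := φ) y < TB.rk (S := S) (φ := φ) x from this ▸ hq⟩
  have hcond : ∀ x ∈ M, {y ∈ M | r y x} ∈ S ∧ φ {y ∈ M | r y x} = x := by
    intro x hx
    obtain ⟨hfx, hxθ⟩ := hmem x hx
    obtain ⟨-, hPS, hxeq⟩ := TB.some_spec hfx
    rw [hseg x hx]
    exact ⟨hPS, hxeq.symm⟩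
  refine ⟨M, ⟨r, hwo, hcond, hMnotS⟩, ?_⟩
  -- uniqueness
  rintro M' ⟨r', hwo', hseg', hM'S⟩
  have wf' : WellFounded (fun x y : M' => r' x y) := hwo'.toIsWellFounded.wf
  have tri' : IsTrichotomous M' (fun x y : M' => r' x y) := hwo'.toTrichotomous
  have min_lemma : ∀ A : Set E, A ⊆ M' → (∀ x ∈ A, ∀ y ∈ M', y ∉ A → r' x y) → A ≠ M' →
      A ∈ S ∧ φ A ∈ M' ∧ φ A ∉ A ∧ {y ∈ M' | r' y (φ A)} = A := by
    intro A hsub hdom hne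
    have hne2 : ∃ z : M', z.1 ∉ A := by
      by_contra hc
      push_neg at hc
      exact hne (hsub.antisymm fun y hy => hc ⟨y, hy⟩)
    obtain ⟨z, hz⟩ := hne2
    set m := wf'.min {w : M' | w.1 ∉ A} ⟨z, hz⟩ with hmdef
    have hmA : m.1 ∉ A := wf'.min_mem {w : M' | w.1 ∉ A} ⟨z, hz⟩
    have hmin : ∀ w : M', w.1 ∉ A → ¬ r' w.1 m.1 := fun w hw =>
      wf'.not_lt_min {w : M' | w.1 ∉ A} hw
    have hsegm : {y ∈ M' | r' y m.1} = A := by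
      ext y
      constructor
      · rintro ⟨hyM, hry⟩
        by_contra hyA
        exact hmin ⟨y, hyM⟩ hyA hry
      · intro hyA
        exact ⟨hsub hyA, hdom y hyA m.1 m.2 hmA⟩
    obtain ⟨hS1, hS2⟩ := hseg' m.1 m.2
    rw [hsegm] at hS1 hS2
    refine ⟨hS1, ?_, ?_, ?_⟩
    · rw [hS2]; exact m.2
    · rw [hS2]; exact hmA
    · rw [hS2]; exact hsegm
  have key : ∀ o, ∀ x ∈ TB.P S φ o, x ∈ M' ∧ ∀ y ∈ M', y ∉ TB.P S φ o → r' x y := by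
    intro o
    induction o using Ordinal.induction with
    | h o IH =>
    rintro x ⟨p, hp, hfp⟩
    obtain ⟨hall, hPS, hx⟩ := TB.some_spec hfp
    have hsub : TB.P S φ p ⊆ M' := fun z hz => (IH p hp z hz).1
    have hdom : ∀ z ∈ TB.P S φ p, ∀ y ∈ M', y ∉ TB.P S φ p → r' z y :=
      fun z hz => (IH p hp z hz).2
    have hne : TB.P S φ p ≠ M' := fun h => hM'S (h ▸ hPS)
    obtain ⟨-, hmM, hmA, hsegm⟩ := min_lemma _ hsub hdom hne
    subst hx
    refine ⟨hmM, ?_⟩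
    intro y hyM hyPo
    have hyP : y ∉ TB.P S φ p := fun h => hyPo (TB.P_mono hp.le h)
    have hxPo : φ (TB.P S φ p) ∈ TB.P S φ o := ⟨p, hp, hfp⟩
    rcases @trichotomous_of _ (fun x y : M' => r' x y) tri' ⟨y, hyM⟩ ⟨φ (TB.P S φ p), hmM⟩ with h | h | h
    · exact absurd (hsegm ▸ (⟨hyM, h⟩ : y ∈ {w ∈ M' | r' w (φ (TB.P S φ p))})) hyP
    · have hyx : y = φ (TB.P S φ p) := congrArg Subtype.val h
      exact absurd (hyx ▸ hxPo) hyPo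
    · exact h
  have hsubM : M ⊆ M' := fun x hx => (key θ x hx).1
  by_contra hne0
  have hne : M ≠ M' := fun h => hne0 h.symm
  obtain ⟨hS1, -, -, -⟩ := min_lemma M hsubM (fun x hx => (key θ x hx).2) hne
  exact hMnotS hS1
end

section
/- (Kanamori) Let E be a set and ψ : P(E) → E any map. Then there exists a unique subset M of E admitting a well-ordering such that: (1) for every x ∈ M, ψ(S_x) = x, where S_x = {y ∈ M | y < x}; (2) ψ(M) ∈ M. -/
open Set

universe u

noncomputable def kanamoriF {E : Type u} (ψ : Set E → E) (α : Ordinal.{u}) : E :=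
  ψ (Set.range fun β : Set.Iio α => kanamoriF ψ β.1)
termination_by α
decreasing_by exact β.2

theorem kanamoriF_def {E : Type u} (ψ : Set E → E) (α : Ordinal.{u}) :
    kanamoriF ψ α = ψ (kanamoriF ψ '' Set.Iio α) := by
  rw [kanamoriF, Set.image_eq_range]

/-- Uniqueness auxiliary: if `M₁` initially embeds into `M₂`, then `M₁ = M₂`. -/
theorem kanamori_aux {E : Type u} (ψ : Set E → E) (M₁ M₂ : Set E)
    (r₁ r₂ : E → E → Prop)
    [h₁ : IsWellOrder M₁ (fun x y : M₁ => r₁ x y)]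
    [h₂ : IsWellOrder M₂ (fun x y : M₂ => r₂ x y)]
    (hc₁ : ∀ x ∈ M₁, ψ {y ∈ M₁ | r₁ y x} = x)
    (hc₂ : ∀ x ∈ M₂, ψ {y ∈ M₂ | r₂ y x} = x)
    (hm₁ : ψ M₁ ∈ M₁)
    (f : InitialSeg (fun x y : M₁ => r₁ x y) (fun x y : M₂ => r₂ x y)) :
    M₁ = M₂ := by
  -- Step 1: f is the identity on underlying elements.
  have key : ∀ x : M₁, ((f x : M₂) : E) = (x : E) := by
    intro x
    induction x using IsWellFounded.induction (fun x y : M₁ => r₁ x y) with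
    | _ x IH =>
      have hset : {y ∈ M₂ | r₂ y ((f x : M₂) : E)} = {y ∈ M₁ | r₁ y (x : E)} := by
        ext y
        constructor
        · rintro ⟨hyM, hr⟩
          obtain ⟨z, hz⟩ := f.mem_range_of_rel (a := x) (b := ⟨y, hyM⟩) hr
          have hzr : r₁ (z : E) (x : E) := by
            have := f.map_rel_iff (a := z) (b := x)
            rw [hz] at this
            exact this.1 hr
          have h1 : ((f z : M₂) : E) = (z : E) := IH z hzr
          rw [hz] at h1
          have hyz : y = (z : E) := h1
          rw [hyz]
          exact ⟨z.2, hzr⟩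
        · rintro ⟨hyM, hr⟩
          have hr' : r₂ ((f ⟨y, hyM⟩ : M₂) : E) ((f x : M₂) : E) :=
            f.map_rel_iff.2 hr
          have hE : ((f ⟨y, hyM⟩ : M₂) : E) = y := IH ⟨y, hyM⟩ hr
          rw [hE] at hr'
          exact ⟨hE ▸ (f ⟨y, hyM⟩ : M₂).2, hr'⟩
      have e1 := hc₂ ((f x : M₂) : E) (f x : M₂).2
      have e2 := hc₁ (x : E) x.2
      rw [hset, e2] at e1
      exact e1.symm
  have hsub : M₁ ⊆ M₂ := by
    intro x hx
    have hE : ((f ⟨x, hx⟩ : M₂) : E) = x := key ⟨x, hx⟩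
    exact hE ▸ (f ⟨x, hx⟩ : M₂).2
  rcases f.eq_or_principal with hsurj | ⟨b, hb⟩
  · apply Set.Subset.antisymm hsub
    intro y hy
    obtain ⟨x, hx⟩ := hsurj ⟨y, hy⟩
    have hyx : y = (x : E) := (congrArg Subtype.val hx).symm.trans (key x)
    rw [hyx]
    exact x.2
  · -- f is a principal segment with top b; derive a contradiction.
    exfalso
    have hM₁ : M₁ = {y ∈ M₂ | r₂ y (b : E)} := by
      ext y
      constructor
      · intro hy
        have hr : r₂ ((f ⟨y, hy⟩ : M₂) : E) (b : E) := (hb (f ⟨y, hy⟩)).1 ⟨_, rfl⟩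
        rw [key ⟨y, hy⟩] at hr
        exact ⟨hsub hy, hr⟩
      · rintro ⟨hyM, hr⟩
        obtain ⟨z, hz⟩ := (hb ⟨y, hyM⟩).2 hr
        have hyz : y = (z : E) := (congrArg Subtype.val hz).symm.trans (key z)
        rw [hyz]
        exact z.2
    have hψ : ψ M₁ = (b : E) := by rw [hM₁]; exact hc₂ _ b.2
    have hbb : r₂ (b : E) (b : E) := by
      have h1 := hm₁
      rw [hψ, hM₁] at h1
      exact h1.2
    exact absurd hbb (irrefl_of (fun x y : M₂ => r₂ x y) b)

theorem kanamori {E : Type*} (ψ : Set E → E) :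
    ∃! M : Set E, ∃ r : E → E → Prop,
      IsWellOrder M (fun x y : M => r x y) ∧
      (∀ x ∈ M, ψ {y ∈ M | r y x} = x) ∧
      ψ M ∈ M := by
  classical
  set f := kanamoriF ψ with hf
  -- the set of ordinals where f repeats
  have hne : ∃ α : Ordinal, f α ∈ f '' Set.Iio α := by
    obtain ⟨a, b, hab, hne⟩ := Function.not_injective_iff.1
      (not_injective_of_ordinal f)
    rcases lt_or_gt_of_ne hne with h | h
    · exact ⟨b, ⟨a, h, hab⟩⟩
    · exact ⟨a, ⟨b, h, hab.symm⟩⟩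
  set α₀ := Ordinal.lt_wf.min _ hne with hα₀
  have hα₀mem : f α₀ ∈ f '' Set.Iio α₀ := Ordinal.lt_wf.min_mem _ hne
  have hα₀min : ∀ β < α₀, f β ∉ f '' Set.Iio β := fun β hβ h =>
    Ordinal.lt_wf.not_lt_min _ h hβ
  have hinj : ∀ β γ, β < α₀ → γ < α₀ → f β = f γ → β = γ := by
    intro β γ hβ hγ he
    by_contra hne'
    rcases lt_or_gt_of_ne hne' with h | h
    · exact hα₀min γ hγ ⟨β, h, he⟩
    · exact hα₀min β hβ ⟨γ, h, he.symm⟩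
  set M : Set E := f '' Set.Iio α₀ with hM
  -- index function: for x ∈ M, the unique ordinal below α₀ mapping to x
  have hidx : ∀ x : M, ∃ β, β < α₀ ∧ f β = (x : E) := fun x => by
    obtain ⟨β, hβ, he⟩ := x.2; exact ⟨β, hβ, he⟩
  set idx : M → Ordinal := fun x => Classical.choose (hidx x) with hidxdef
  have hidx1 : ∀ x : M, idx x < α₀ := fun x => (Classical.choose_spec (hidx x)).1
  have hidx2 : ∀ x : M, f (idx x) = (x : E) := fun x => (Classical.choose_spec (hidx x)).2
  set r : E → E → Prop := fun a b =>
    ∃ β γ : Ordinal, β < γ ∧ γ < α₀ ∧ f β = a ∧ f γ = b with hr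
  have hriff : ∀ x y : M, r x y ↔ idx x < idx y := by
    intro x y
    constructor
    · rintro ⟨β, γ, hβγ, hγ, hfx, hfy⟩
      have hβ : β < α₀ := hβγ.trans hγ
      rw [hinj β (idx x) hβ (hidx1 x) (hfx.trans (hidx2 x).symm),
        hinj γ (idx y) hγ (hidx1 y) (hfy.trans (hidx2 y).symm)] at hβγ
      exact hβγ
    · intro h
      exact ⟨idx x, idx y, h, hidx1 y, hidx2 x, hidx2 y⟩
  have hemb : (fun x y : M => r x y) ↪r ((· < ·) : Ordinal → Ordinal → Prop) := by
    refine ⟨⟨idx, ?_⟩, ?_⟩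
    · intro x y hxy
      apply Subtype.ext
      rw [← hidx2 x, ← hidx2 y, hxy]
    · intro x y
      exact (hriff x y).symm
  have hwo : IsWellOrder M (fun x y : M => r x y) := hemb.isWellOrder
  have hcond : ∀ x ∈ M, ψ {y ∈ M | r y x} = x := by
    rintro x ⟨γ, hγ, rfl⟩
    have hγ' : γ < α₀ := hγ
    have hset : {y ∈ M | r y (f γ)} = f '' Set.Iio γ := by
      ext y
      constructor
      · rintro ⟨hyM, β', γ', hβγ', hγ'', hfy, hfγ⟩
        rw [hinj γ' γ hγ'' hγ' hfγ] at hβγ'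
        exact ⟨β', hβγ', hfy⟩
      · rintro ⟨β, hβ, rfl⟩
        have hβ' : β < γ := hβ
        exact ⟨⟨β, Set.mem_Iio.2 (hβ'.trans hγ'), rfl⟩, β, γ, hβ', hγ', rfl, rfl⟩
    rw [hset, hf]
    exact (kanamoriF_def ψ γ).symm
  have htop : ψ M ∈ M := by
    have h1 : ψ M = f α₀ := by rw [hM, hf]; exact (kanamoriF_def ψ α₀).symm
    rw [h1]
    exact hα₀mem
  refine ⟨M, ⟨r, hwo, hcond, htop⟩, ?_⟩
  rintro M' ⟨r', hwo', hcond', htop'⟩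
  haveI := hwo'
  haveI := hwo
  rcases InitialSeg.total (fun x y : M' => r' x y) (fun x y : M => r x y) with g | g
  · exact kanamori_aux ψ M' M r' r hcond' hcond htop' g
  · exact (kanamori_aux ψ M M' r r' hcond hcond' htop g).symm
end
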